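/- Let p be a positive integer and a a natural number with p - a > 1. Then for every t < 0, ∫_ℝ e^{itω} (1-iω)^{a} (1+iω)^{-p} dω = 0. (Equivalently: the inverse Fourier transform of ω ↦ (1+iω)^{-p}(1-iω)^{-q} vanishes on (-∞,0) whenever q = -a is a nonpositive integer and p+q > 1.) -/

import Mathlib

open Complex Real MeasureTheory

open Set Filter FourierTransform Topology



-- integrability of x^n e^{-cx} on (0,∞) for Re c > 0
lemma integrableOn_pow_mul_exp_neg (n : ℕ) (c : ℂ) (hc : 0 < c.re) :
    IntegrableOn (fun x : ℝ => (x : ℂ) ^ n * Complex.exp (-(c * x))) (Ioi 0) := by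
  have hb : 0 < c.re / 2 := by linarith
  have hg : IntegrableOn (fun x : ℝ => x ^ n * Real.exp (-(c.re * x))) (Ioi 0) := by
    apply integrable_of_isBigO_exp_neg hb
    · exact ((continuous_pow n).mul (Real.continuous_exp.comp (by continuity))).continuousOn
    · have h1 : Tendsto (fun x : ℝ => x ^ n * Real.exp (-(c.re / 2) * x)) atTop (𝓝 0) := by
        have := tendsto_rpow_mul_exp_neg_mul_atTop_nhds_zero (n : ℝ) (c.re / 2) hb
        apply this.congr'
        filter_upwards [eventually_gt_atTop (0 : ℝ)] with x hx
        rw [Real.rpow_natCast]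
      have h2 : (fun x : ℝ => x ^ n * Real.exp (-(c.re * x)))
          = fun x : ℝ => (x ^ n * Real.exp (-(c.re / 2) * x)) * Real.exp (-(c.re / 2) * x) := by
        funext x
        rw [mul_assoc, ← Real.exp_add]
        ring_nf
      rw [h2]
      simpa using (h1.isBigO_one ℝ).mul
        (Asymptotics.isBigO_refl (fun x : ℝ => Real.exp (-(c.re / 2) * x)) atTop)
  have hmeas : AEStronglyMeasurable (fun x : ℝ => (x : ℂ) ^ n * Complex.exp (-(c * x)))
      (volume.restrict (Ioi 0)) := by
    apply Continuous.aestronglyMeasurable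
    exact (continuous_ofReal.pow n).mul ((by continuity : Continuous fun x : ℝ => -(c * x)).cexp)
  refine hg.mono' hmeas ?_
  filter_upwards [ae_restrict_mem measurableSet_Ioi] with x hx
  rw [norm_mul, norm_pow, Complex.norm_exp,
    Complex.norm_real, Real.norm_eq_abs, abs_of_pos hx]
  simp [Complex.neg_re, Complex.mul_re]


lemma tendsto_pow_mul_cexp_neg (n : ℕ) (c : ℂ) (hc : 0 < c.re) :
    Tendsto (fun x : ℝ => (x : ℂ) ^ n * Complex.exp (-(c * x))) atTop (𝓝 0) := by
  have h1 : Tendsto (fun x : ℝ => x ^ n * Real.exp (-c.re * x)) atTop (𝓝 0) := by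
    have := tendsto_rpow_mul_exp_neg_mul_atTop_nhds_zero (n : ℝ) c.re hc
    apply this.congr'
    filter_upwards [eventually_gt_atTop (0 : ℝ)] with x hx
    rw [Real.rpow_natCast]
  apply squeeze_zero_norm' _ h1
  filter_upwards [eventually_gt_atTop (0 : ℝ)] with x hx
  rw [norm_mul, norm_pow, Complex.norm_exp,
    Complex.norm_real, Real.norm_eq_abs, abs_of_pos hx]
  simp [Complex.neg_re, Complex.mul_re]

lemma hasDerivAt_pow_mul_cexp_neg (n : ℕ) (c : ℂ) (x : ℝ) :
    HasDerivAt (fun x : ℝ => (x : ℂ) ^ n * Complex.exp (-(c * x)))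
      ((n : ℂ) * (x : ℂ) ^ (n - 1) * Complex.exp (-(c * x))
        - c * ((x : ℂ) ^ n * Complex.exp (-(c * x)))) x := by
  have h1 : HasDerivAt (fun x : ℝ => (x : ℂ)) 1 x := by
    simpa using (hasDerivAt_id x).ofReal_comp
  have h2 : HasDerivAt (fun x : ℝ => (x : ℂ) ^ n) ((n : ℂ) * (x : ℂ) ^ (n - 1)) x :=
    (hasDerivAt_pow n ((x : ℝ) : ℂ)).comp_ofReal
  have h3 : HasDerivAt (fun x : ℝ => Complex.exp (-(c * x)))
      (Complex.exp (-(c * x)) * (-c)) x := by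
    have h4 : HasDerivAt (fun x : ℝ => -(c * (x : ℂ))) (-c) x := by
      have := (h1.const_mul c).neg; simp only [mul_one] at this; exact this
    exact h4.cexp
  have := h2.mul h3
  exact this.congr_deriv (by ring)

lemma integral_pow_mul_exp_neg (c : ℂ) (hc : 0 < c.re) :
    ∀ n : ℕ, (∫ (x : ℝ) in Ioi 0, (x : ℂ) ^ n * Complex.exp (-(c * x)))
      = (n.factorial : ℂ) / c ^ (n + 1) := by
  have hc0 : c ≠ 0 := fun h => by simp [h] at hc
  intro n
  induction n with
  | zero =>
    have hd : ∀ x ∈ Ici (0 : ℝ), HasDerivAt (fun x : ℝ => -(Complex.exp (-(c * x)) / c))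
        ((fun x : ℝ => (x : ℂ) ^ 0 * Complex.exp (-(c * x))) x) x := by
      intro x _
      have h0 := hasDerivAt_pow_mul_cexp_neg 0 c x
      simp only [pow_zero, one_mul, Nat.cast_zero, zero_mul, zero_sub] at h0 ⊢
      have := (h0.div_const c).neg
      exact this.congr_deriv (by field_simp)
    have hlim : Tendsto (fun x : ℝ => -(Complex.exp (-(c * x)) / c)) atTop (𝓝 0) := by
      have := ((tendsto_pow_mul_cexp_neg 0 c hc).div_const c).neg
      simpa using this
    have key := integral_Ioi_of_hasDerivAt_of_tendsto' hd
      (integrableOn_pow_mul_exp_neg 0 c hc) hlim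
    simp only [pow_zero, one_mul, Complex.ofReal_zero, mul_zero, neg_zero, Complex.exp_zero,
      zero_sub, neg_neg] at key ⊢
    rw [key]
    simp [Nat.factorial]
  | succ n ih =>
    set I := ∫ (x : ℝ) in Ioi 0, (x : ℂ) ^ (n + 1) * Complex.exp (-(c * x)) with hI
    have int1 : IntegrableOn
        (fun x : ℝ => ((n : ℂ) + 1) * ((x : ℂ) ^ n * Complex.exp (-(c * x)))) (Ioi 0) :=
      (integrableOn_pow_mul_exp_neg n c hc).const_mul _
    have int2 : IntegrableOn
        (fun x : ℝ => c * ((x : ℂ) ^ (n + 1) * Complex.exp (-(c * x)))) (Ioi 0) :=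
      (integrableOn_pow_mul_exp_neg (n + 1) c hc).const_mul _
    have hd : ∀ x ∈ Ici (0 : ℝ),
        HasDerivAt (fun x : ℝ => (x : ℂ) ^ (n + 1) * Complex.exp (-(c * x)))
        ((fun x : ℝ => ((n : ℂ) + 1) * ((x : ℂ) ^ n * Complex.exp (-(c * x)))
          - c * ((x : ℂ) ^ (n + 1) * Complex.exp (-(c * x)))) x) x := by
      intro x _
      have h0 := hasDerivAt_pow_mul_cexp_neg (n + 1) c x
      convert h0 using 1
      simp only [Nat.add_sub_cancel]
      push_cast
      ring
    have key := integral_Ioi_of_hasDerivAt_of_tendsto' hd (int1.sub int2)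
      (tendsto_pow_mul_cexp_neg (n + 1) c hc)
    rw [integral_sub int1 int2, integral_const_mul, integral_const_mul, ih, ← hI] at key
    simp only [Complex.ofReal_zero, zero_pow (Nat.succ_ne_zero n), zero_mul, sub_zero,
      mul_zero, neg_zero, Complex.exp_zero, zero_sub] at key
    -- key : (n+1) * (n!/c^(n+1)) - c * I = 0  (approximately)
    have hcp : (c : ℂ) ^ (n + 1) ≠ 0 := pow_ne_zero _ hc0
    have key2 : ((n : ℂ) + 1) * (n.factorial : ℂ) - c ^ (n + 2) * I = 0 := by
      have := key
      field_simp at this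
      linear_combination this
    rw [eq_div_iff (pow_ne_zero _ hc0), Nat.factorial_succ]
    push_cast
    linear_combination -key2


lemma one_add_mul_I_ne (b : ℝ) : (1 : ℂ) + b * Complex.I ≠ 0 := by
  intro h
  have := congrArg Complex.re h
  simp at this

lemma norm_one_add_mul_I_sq (b : ℝ) : ‖(1 : ℂ) + b * Complex.I‖ ^ 2 = 1 + b ^ 2 := by
  rw [Complex.sq_norm]
  simp [Complex.normSq_apply]
  ring

-- the one-sided function
noncomputable def oneSided (n : ℕ) : ℝ → ℂ :=
  Set.indicator (Ioi 0) fun x : ℝ => (x : ℂ) ^ n * Complex.exp (-(x : ℂ))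

lemma oneSided_integrable (n : ℕ) : Integrable (oneSided n) := by
  rw [oneSided, integrable_indicator_iff measurableSet_Ioi]
  simpa using integrableOn_pow_mul_exp_neg n 1 (by norm_num)

lemma fourier_oneSided (n : ℕ) (ξ : ℝ) :
    𝓕 (oneSided n) ξ = (n.factorial : ℂ) / ((1 : ℂ) + ((2 * π * ξ : ℝ) : ℂ) * Complex.I) ^ (n + 1) := by
  have hre : (0 : ℝ) < ((1 : ℂ) + ((2 * π * ξ : ℝ) : ℂ) * Complex.I).re := by simp
  rw [Real.fourier_real_eq_integral_exp_smul]
  have h1 : ∀ v : ℝ, Complex.exp (↑(-2 * π * v * ξ) * Complex.I) • oneSided n v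
      = Set.indicator (Ioi 0)
        (fun v : ℝ => (v : ℂ) ^ n
          * Complex.exp (-((((1 : ℂ) + ((2 * π * ξ : ℝ) : ℂ) * Complex.I)) * v))) v := by
    intro v
    rw [oneSided, smul_eq_mul]
    by_cases hv : v ∈ Ioi (0 : ℝ)
    · rw [Set.indicator_of_mem hv, Set.indicator_of_mem hv, mul_comm, mul_assoc,
        ← Complex.exp_add]
      congr 2
      push_cast
      ring
    · rw [Set.indicator_of_notMem hv, Set.indicator_of_notMem hv, mul_zero]
  simp_rw [h1]
  rw [integral_indicator measurableSet_Ioi]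
  exact integral_pow_mul_exp_neg _ hre n

lemma fourier_oneSided_integrable (n : ℕ) (hn : 1 ≤ n) : Integrable (𝓕 (oneSided n)) := by
  have hfun : 𝓕 (oneSided n)
      = fun ξ : ℝ => (n.factorial : ℂ) / ((1 : ℂ) + ((2 * π * ξ : ℝ) : ℂ) * Complex.I) ^ (n + 1) :=
    funext (fourier_oneSided n)
  rw [hfun]
  have hbound : Integrable fun ξ : ℝ => (n.factorial : ℝ) * (1 + (2 * π * ξ) ^ 2)⁻¹ := by
    have h2 : Integrable fun ξ : ℝ => (1 + ((2 * π) * ξ) ^ 2)⁻¹ :=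
      integrable_inv_one_add_sq.comp_mul_left' (by positivity : (2 * π : ℝ) ≠ 0)
    exact h2.const_mul _
  apply hbound.mono'
  · apply Continuous.aestronglyMeasurable
    apply Continuous.div continuous_const
    · exact (continuous_pow _).comp (by continuity)
    · intro ξ
      exact pow_ne_zero _ (one_add_mul_I_ne (2 * π * ξ))
  · filter_upwards with ξ
    have hb : (1 : ℝ) ≤ ‖(1 : ℂ) + ((2 * π * ξ : ℝ) : ℂ) * Complex.I‖ := by
      nlinarith [norm_one_add_mul_I_sq (2 * π * ξ), norm_nonneg ((1 : ℂ) + ((2 * π * ξ : ℝ) : ℂ) * Complex.I)]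
    have hle : (1 : ℝ) + (2 * π * ξ) ^ 2 ≤ ‖((1 : ℂ) + ((2 * π * ξ : ℝ) : ℂ) * Complex.I) ^ (n + 1)‖ := by
      rw [norm_pow]
      calc (1 : ℝ) + (2 * π * ξ) ^ 2 = ‖(1 : ℂ) + ((2 * π * ξ : ℝ) : ℂ) * Complex.I‖ ^ 2 :=
            (norm_one_add_mul_I_sq _).symm
        _ ≤ ‖(1 : ℂ) + ((2 * π * ξ : ℝ) : ℂ) * Complex.I‖ ^ (n + 1) := by
            apply pow_le_pow_right₀ hb
            omega
    rw [norm_div, Complex.norm_natCast, div_eq_mul_inv]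
    have h0 : (0 : ℝ) < 1 + (2 * π * ξ) ^ 2 := by positivity
    exact mul_le_mul_of_nonneg_left (inv_anti₀ h0 hle) (by positivity)

lemma norm_one_add_I_mul_sq (b : ℝ) : ‖(1 : ℂ) + Complex.I * b‖ ^ 2 = 1 + b ^ 2 := by
  rw [Complex.sq_norm]
  simp [Complex.normSq_apply]
  ring

lemma one_add_I_mul_ne (b : ℝ) : (1 : ℂ) + Complex.I * b ≠ 0 := by
  intro h
  have := congrArg Complex.re h
  simp at this

lemma integrable_cexp_mul_inv_pow (t : ℝ) (m : ℕ) (hm : 2 ≤ m) :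
    Integrable fun ω : ℝ =>
      Complex.exp (Complex.I * t * ω) * (((1 : ℂ) + Complex.I * ω) ^ m)⁻¹ := by
  apply integrable_inv_one_add_sq.mono'
  · apply Continuous.aestronglyMeasurable
    apply Continuous.mul
    · exact Complex.continuous_exp.comp (by continuity)
    · apply Continuous.inv₀
      · exact (continuous_pow m).comp (by continuity)
      · intro ω
        exact pow_ne_zero _ (one_add_I_mul_ne ω)
  · filter_upwards with ω
    have hb : (1 : ℝ) ≤ ‖(1 : ℂ) + Complex.I * ω‖ := by
      nlinarith [norm_one_add_I_mul_sq ω, norm_nonneg ((1 : ℂ) + Complex.I * ω),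
        sq_nonneg (ω : ℝ)]
    have hle : (1 : ℝ) + ω ^ 2 ≤ ‖((1 : ℂ) + Complex.I * ω) ^ m‖ := by
      rw [norm_pow]
      calc (1 : ℝ) + ω ^ 2 = ‖(1 : ℂ) + Complex.I * ω‖ ^ 2 := (norm_one_add_I_mul_sq ω).symm
        _ ≤ ‖(1 : ℂ) + Complex.I * ω‖ ^ m := pow_le_pow_right₀ hb (by omega)
    have hexp : ‖Complex.exp (Complex.I * t * ω)‖ = 1 := by
      rw [Complex.norm_exp]
      simp [Complex.mul_re]
    rw [norm_mul, hexp, one_mul, norm_inv]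
    have h0 : (0 : ℝ) < 1 + ω ^ 2 := by positivity
    exact inv_anti₀ h0 hle

lemma key_vanish (m : ℕ) (hm : 2 ≤ m) (t : ℝ) (ht : t < 0) :
    (∫ ω : ℝ, Complex.exp (Complex.I * t * ω) * (((1 : ℂ) + Complex.I * ω) ^ m)⁻¹) = 0 := by
  obtain ⟨n, rfl⟩ : ∃ n, m = n + 1 := ⟨m - 1, by omega⟩
  have hn : 1 ≤ n := by omega
  have hf := oneSided_integrable n
  have hFf := fourier_oneSided_integrable n hn
  have hcont : ContinuousAt (oneSided n) t := by
    have hev : oneSided n =ᶠ[𝓝 t] fun _ => 0 := by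
      filter_upwards [Iio_mem_nhds ht] with x hx
      exact Set.indicator_of_notMem (by simpa using not_lt.mpr hx.le) _
    exact continuousAt_const.congr hev.symm
  have hinv := hf.fourierInv_fourier_eq hFf hcont
  have hzero : oneSided n t = 0 :=
    Set.indicator_of_notMem (by simpa using not_lt.mpr ht.le) _
  rw [hzero, Real.fourierInv_eq'] at hinv
  have h0 : (∫ ξ : ℝ, Complex.exp (((2 * π * (ξ * t) : ℝ) : ℂ) * Complex.I)
      * (((1 : ℂ) + ((2 * π * ξ : ℝ) : ℂ) * Complex.I) ^ (n + 1))⁻¹) = 0 := by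
    have hF : ∀ ξ : ℝ, Complex.exp (((2 * π * (ξ * t) : ℝ) : ℂ) * Complex.I) • 𝓕 (oneSided n) ξ
        = (n.factorial : ℂ) * (Complex.exp (((2 * π * (ξ * t) : ℝ) : ℂ) * Complex.I)
          * (((1 : ℂ) + ((2 * π * ξ : ℝ) : ℂ) * Complex.I) ^ (n + 1))⁻¹) := by
      intro ξ
      rw [fourier_oneSided n ξ, smul_eq_mul, div_eq_mul_inv]
      ring
    have hinner : ∀ ξ : ℝ, (inner ℝ ξ t : ℝ) = ξ * t := fun ξ => by simp [mul_comm]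
    simp only [hinner] at hinv
    rw [show (∫ ξ : ℝ, Complex.exp (((2 * π * (ξ * t) : ℝ) : ℂ) * Complex.I)
        • 𝓕 (oneSided n) ξ) = (n.factorial : ℂ)
        * ∫ ξ : ℝ, Complex.exp (((2 * π * (ξ * t) : ℝ) : ℂ) * Complex.I)
          * (((1 : ℂ) + ((2 * π * ξ : ℝ) : ℂ) * Complex.I) ^ (n + 1))⁻¹ by
      rw [← integral_const_mul]; exact integral_congr_ae (Filter.Eventually.of_forall hF)] at hinv
    have hfac : (n.factorial : ℂ) ≠ 0 := by
      exact_mod_cast Nat.cast_ne_zero.mpr n.factorial_ne_zero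
    exact (mul_eq_zero.mp hinv).resolve_left hfac
  have hcv := MeasureTheory.Measure.integral_comp_mul_left
    (fun ω : ℝ => Complex.exp (Complex.I * t * ω) * (((1 : ℂ) + Complex.I * ω) ^ (n + 1))⁻¹)
    (2 * π)
  have hlhs : (fun x : ℝ => Complex.exp (Complex.I * t * (((2 * π * x : ℝ)) : ℂ))
      * (((1 : ℂ) + Complex.I * ((2 * π * x : ℝ) : ℂ)) ^ (n + 1))⁻¹)
      = fun ξ : ℝ => Complex.exp (((2 * π * (ξ * t) : ℝ) : ℂ) * Complex.I)
        * (((1 : ℂ) + ((2 * π * ξ : ℝ) : ℂ) * Complex.I) ^ (n + 1))⁻¹ := by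
    funext x
    congr 2
    · push_cast; ring
    · push_cast; ring
  rw [hlhs, h0] at hcv
  have hne : |(2 * π : ℝ)⁻¹| ≠ 0 := by
    simp [Real.pi_ne_zero]
  have := (smul_eq_zero.mp hcv.symm).resolve_left hne
  exact this

/-- If `p` is a positive integer, `a` a natural number with `p - a > 1`, then for `t < 0`
`∫ e^{itω} (1-iω)^a (1+iω)^{-p} dω = 0`: the inverse Fourier transform of
`(1+iω)^{-p}(1-iω)^{-q}` vanishes on `(-∞,0)` when `q = -a` is a nonpositive integer
and `p + q > 1`. -/
theorem inverse_fourier_vanishes_on_negatives (p a : ℕ) (hpa : 1 < (p : ℝ) - (a : ℝ))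
    (t : ℝ) (ht : t < 0) :
    (∫ ω : ℝ, Complex.exp (Complex.I * (t : ℂ) * (ω : ℂ)) *
        (1 - Complex.I * (ω : ℂ)) ^ a *
        (1 + Complex.I * (ω : ℂ)) ^ (-(p : ℂ))) = 0 := by
  have hp2 : a + 2 ≤ p := by
    have h1 : (a : ℝ) + 1 < p := by linarith
    have h2 : a + 1 < p := by exact_mod_cast h1
    omega
  have hpt : ∀ ω : ℝ, Complex.exp (Complex.I * t * ω) * (1 - Complex.I * ω) ^ a
      * (1 + Complex.I * ω) ^ (-(p : ℂ))
      = ∑ k ∈ Finset.range (a + 1), ((-1 : ℂ) ^ k * 2 ^ (a - k) * (a.choose k : ℂ))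
        * (Complex.exp (Complex.I * t * ω) * (((1 : ℂ) + Complex.I * ω) ^ (p - k))⁻¹) := by
    intro ω
    have hz := one_add_I_mul_ne ω
    rw [show -(p : ℂ) = -((p : ℕ) : ℂ) from by norm_num, Complex.cpow_neg,
      Complex.cpow_natCast]
    rw [show (1 : ℂ) - Complex.I * ω = -((1 : ℂ) + Complex.I * ω) + 2 by ring, add_pow]
    rw [Finset.mul_sum, Finset.sum_mul]
    apply Finset.sum_congr rfl
    intro k hk
    have hkp : k ≤ p := by have := Finset.mem_range.mp hk; omega
    have hinv : (((1 : ℂ) + Complex.I * ω) ^ (p - k))⁻¹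
        = ((1 : ℂ) + Complex.I * ω) ^ k * (((1 : ℂ) + Complex.I * ω) ^ p)⁻¹ := by
      rw [pow_sub₀ _ hz hkp]
      field_simp
    rw [hinv, neg_pow]
    ring
  rw [show (fun ω : ℝ => Complex.exp (Complex.I * t * ω) * (1 - Complex.I * ω) ^ a
      * (1 + Complex.I * ω) ^ (-(p : ℂ)))
      = fun ω : ℝ => ∑ k ∈ Finset.range (a + 1),
        ((-1 : ℂ) ^ k * 2 ^ (a - k) * (a.choose k : ℂ))
        * (Complex.exp (Complex.I * t * ω) * (((1 : ℂ) + Complex.I * ω) ^ (p - k))⁻¹)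
    from funext hpt]
  rw [integral_finset_sum _ (fun k hk => by
    exact (integrable_cexp_mul_inv_pow t (p - k)
      (by have := Finset.mem_range.mp hk; omega)).const_mul _)]
  apply Finset.sum_eq_zero
  intro k hk
  rw [integral_const_mul, key_vanish (p - k) (by have := Finset.mem_range.mp hk; omega) t ht,
    mul_zero]
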